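/- arXiv:2312.04023 — 3 statements merged into one kernel-verified Lean document; each statement's English description precedes it below -/
import Mathlib

section
/- Let Ψ ∈ M_{d×N}(ℂ) and Ψ⁺ its Moore–Penrose pseudoinverse. If W_1, …, W_L ∈ M_N(ℂ) are positive semidefinite with Σ_i W_i = Ψ*Ψ, then the matrices M_i := (Ψ⁺)* W_i Ψ⁺ + (1/L)(1_d − ΨΨ⁺) are positive semidefinite and satisfy Σ_{i=1}^L M_i = 1_d. -/
open Matrix ComplexOrder

/-- If `P = Ψ⁺` is the Moore–Penrose pseudoinverse of `Ψ` (characterized by the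
four Penrose equations), and `W₁, …, W_L ⪰ 0` sum to `ΨᴴΨ`, then the matrices
`Mᵢ = Pᴴ Wᵢ P + (1/L)(1 − ΨP)` are positive semidefinite and sum to the identity. -/
theorem reconstructed_povm {d N L : ℕ} (hL : 1 ≤ L)
    (Ψ : Matrix (Fin d) (Fin N) ℂ) (P : Matrix (Fin N) (Fin d) ℂ)
    (h1 : Ψ * P * Ψ = Ψ) (h2 : P * Ψ * P = P)
    (h3 : (Ψ * P)ᴴ = Ψ * P) (h4 : (P * Ψ)ᴴ = P * Ψ)
    (W : Fin L → Matrix (Fin N) (Fin N) ℂ)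
    (hW : ∀ i, (W i).PosSemidef) (hsum : ∑ i, W i = Ψᴴ * Ψ)
    (M : Fin L → Matrix (Fin d) (Fin d) ℂ)
    (hM : ∀ i, M i = Pᴴ * W i * P + ((1 : ℂ) / L) • (1 - Ψ * P)) :
    (∀ i, (M i).PosSemidef) ∧ ∑ i, M i = 1 := by
  set Q : Matrix (Fin d) (Fin d) ℂ := 1 - Ψ * P with hQdef
  have hidem : (Ψ * P) * (Ψ * P) = Ψ * P := by
    rw [← Matrix.mul_assoc, h1]
  have hQH : Qᴴ = Q := by
    rw [hQdef, conjTranspose_sub, conjTranspose_one, h3]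
  have hQ2 : Q * Q = Q := by
    rw [hQdef]
    simp [mul_sub, sub_mul, hidem]
  have hLC : (L : ℂ) ≠ 0 := by
    exact_mod_cast Nat.one_le_iff_ne_zero.mp hL
  -- positivity of the scaled projection
  have hscale : ((1 : ℂ) / L) • Q = ((((L : ℝ)⁻¹).sqrt : ℂ) • Q)ᴴ * ((((L : ℝ)⁻¹).sqrt : ℂ) • Q) := by
    rw [conjTranspose_smul, hQH, smul_mul_smul_comm, hQ2]
    congr 1
    rw [Complex.star_def, Complex.conj_ofReal, ← Complex.ofReal_mul,
      Real.mul_self_sqrt (by positivity)]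
    push_cast
    rw [one_div]
  have hQpsd : (((1 : ℂ) / L) • Q).PosSemidef := by
    rw [hscale]; exact posSemidef_conjTranspose_mul_self _
  have hsumPWP : Pᴴ * (Ψᴴ * Ψ) * P = Ψ * P := by
    calc Pᴴ * (Ψᴴ * Ψ) * P = (Ψ * P)ᴴ * (Ψ * P) := by
          rw [conjTranspose_mul]; simp [Matrix.mul_assoc]
      _ = Ψ * P := by rw [h3, hidem]
  refine ⟨fun i => ?_, ?_⟩
  · rw [hM i]
    exact ((hW i).conjTranspose_mul_mul_same P).add hQpsd
  · have : ∑ i, M i = Pᴴ * (∑ i, W i) * P + (L : ℕ) • (((1 : ℂ) / L) • Q) := by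
      simp [hM, Finset.sum_add_distrib, Matrix.mul_sum, Matrix.sum_mul]
    rw [this, hsum, hsumPWP, ← Nat.cast_smul_eq_nsmul ℂ, smul_smul, mul_one_div,
      div_self hLC, one_smul, hQdef]
    abel
end

section
/- With M_i := (Ψ⁺)* W_i Ψ⁺ + (1/L)(1_d − ΨΨ⁺) constructed from positive semidefinite W_1, …, W_L summing to Ψ*Ψ, one has ⟨ψ_j| M_i |ψ_j⟩ = ⟨j| W_i |j⟩ for all i ∈ [L] and j ∈ [N], where |ψ_j⟩ = Ψ|j⟩. -/
open Matrix ComplexOrder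

lemma sum_conjTranspose_mul_self_eq_zero {m n L : ℕ} (B : Fin L → Matrix (Fin m) (Fin n) ℂ)
    (h : ∑ i, (B i)ᴴ * B i = 0) : ∀ i, B i = 0 := by
  have tr_nonneg : ∀ i, 0 ≤ ((B i)ᴴ * B i).trace := by
    intro i
    apply Finset.sum_nonneg
    intro j _
    rw [Matrix.diag_apply, Matrix.mul_apply]
    exact Finset.sum_nonneg fun k _ => by
      simpa using star_mul_self_nonneg (B i k j)
  have hsum : ∑ i, ((B i)ᴴ * B i).trace = 0 := by
    rw [← Matrix.trace_sum, h, Matrix.trace_zero]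
  have htr : ∀ i ∈ Finset.univ, ((B i)ᴴ * B i).trace = 0 :=
    (Finset.sum_eq_zero_iff_of_nonneg (fun i _ => tr_nonneg i)).mp hsum
  intro i
  have h0 : ∑ j, ∑ k, star (B i k j) * B i k j = 0 := by
    have := htr i (Finset.mem_univ i)
    simpa [Matrix.trace, Matrix.diag, Matrix.mul_apply] using this
  ext k j
  have h1 : ∀ j ∈ (Finset.univ : Finset (Fin n)),
      0 ≤ ∑ k, star (B i k j) * B i k j := fun j _ =>
    Finset.sum_nonneg fun k _ => by simpa using star_mul_self_nonneg (B i k j)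
  have h2 := (Finset.sum_eq_zero_iff_of_nonneg h1).mp h0 j (Finset.mem_univ j)
  have h3 := (Finset.sum_eq_zero_iff_of_nonneg
    (fun k _ => by simpa using star_mul_self_nonneg (B i k j))).mp h2 k (Finset.mem_univ k)
  have hns : Complex.normSq (B i k j) = 0 := by
    have h3' := h3
    rw [Complex.star_def, ← Complex.normSq_eq_conj_mul_self] at h3'
    exact_mod_cast h3'
  simpa using Complex.normSq_eq_zero.mp hns

lemma exists_eq_conjTranspose_mul_self_aux {N : ℕ} (A : Matrix (Fin N) (Fin N) ℂ)
    (hA : A.PosSemidef) : ∃ B : Matrix (Fin N) (Fin N) ℂ, A = Bᴴ * B := by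
  open scoped Matrix.Norms.L2Operator MatrixOrder in
  obtain ⟨B, hB⟩ := CStarAlgebra.nonneg_iff_eq_star_mul_self.mp hA.nonneg
  exact ⟨B, hB⟩

/-- With `Mᵢ = (Ψ⁺)ᴴ Wᵢ Ψ⁺ + (1/L)(1 − ΨΨ⁺)` constructed from positive
semidefinite `W₁, …, W_L` summing to `ΨᴴΨ`, one has `⟨ψⱼ|Mᵢ|ψⱼ⟩ = ⟨j|Wᵢ|j⟩`
for all `i, j`, where `|ψⱼ⟩ = Ψ|j⟩`. -/
theorem reconstructed_povm_probabilities {d N L : ℕ} (hL : 1 ≤ L)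
    (Ψ : Matrix (Fin d) (Fin N) ℂ) (P : Matrix (Fin N) (Fin d) ℂ)
    (h1 : Ψ * P * Ψ = Ψ) (h2 : P * Ψ * P = P)
    (h3 : (Ψ * P)ᴴ = Ψ * P) (h4 : (P * Ψ)ᴴ = P * Ψ)
    (W : Fin L → Matrix (Fin N) (Fin N) ℂ)
    (hW : ∀ i, (W i).PosSemidef) (hsum : ∑ i, W i = Ψᴴ * Ψ)
    (M : Fin L → Matrix (Fin d) (Fin d) ℂ)
    (hM : ∀ i, M i = Pᴴ * W i * P + ((1 : ℂ) / L) • (1 - Ψ * P)) :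
    ∀ (i : Fin L) (j : Fin N),
      dotProduct (star (Ψ *ᵥ Pi.single j 1)) ((M i) *ᵥ (Ψ *ᵥ Pi.single j 1))
        = (W i) j j := by
  set Q : Matrix (Fin N) (Fin N) ℂ := 1 - P * Ψ with hQ
  have hΨQ : Ψ * Q = 0 := by
    rw [hQ, Matrix.mul_sub, Matrix.mul_one, ← Matrix.mul_assoc, h1, sub_self]
  -- ∑ i, Qᴴ W_i Q = 0
  choose S hS using fun i => exists_eq_conjTranspose_mul_self_aux (W i) (hW i)
  have hBsum : ∑ i, (S i * Q)ᴴ * (S i * Q) = 0 := by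
    have heach : ∀ i, (S i * Q)ᴴ * (S i * Q) = Qᴴ * W i * Q := by
      intro i
      rw [conjTranspose_mul, hS i]
      simp only [Matrix.mul_assoc]
    simp_rw [heach]
    rw [← Finset.sum_mul, ← Finset.mul_sum, hsum, Matrix.mul_assoc, Matrix.mul_assoc,
      hΨQ, Matrix.mul_zero, Matrix.mul_zero]
  have hsqrtQ : ∀ i, S i * Q = 0 := sum_conjTranspose_mul_self_eq_zero _ hBsum
  have hWQ : ∀ i, W i * Q = 0 := by
    intro i
    rw [hS i, Matrix.mul_assoc, hsqrtQ i, Matrix.mul_zero]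
  have hWPΨ : ∀ i, W i * (P * Ψ) = W i := by
    intro i
    have := hWQ i
    rw [hQ, Matrix.mul_sub, Matrix.mul_one, sub_eq_zero] at this
    exact this.symm
  have hPΨW : ∀ i, (P * Ψ) * W i = W i := by
    intro i
    have := congrArg conjTranspose (hWPΨ i)
    rwa [conjTranspose_mul, h4, (hW i).1.eq] at this
  have key : ∀ i, Ψᴴ * M i * Ψ = W i := by
    intro i
    rw [hM i]
    rw [Matrix.mul_add, Matrix.add_mul]
    have hz : Ψᴴ * (((1 : ℂ) / L) • (1 - Ψ * P)) * Ψ = 0 := by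
      rw [Matrix.mul_smul, Matrix.smul_mul, Matrix.mul_sub, Matrix.mul_one, Matrix.sub_mul,
        Matrix.mul_assoc Ψᴴ (Ψ * P) Ψ, h1, sub_self, smul_zero]
    rw [hz, add_zero]
    calc Ψᴴ * (Pᴴ * W i * P) * Ψ
        = (P * Ψ)ᴴ * (W i * (P * Ψ)) := by
          rw [conjTranspose_mul]
          simp only [Matrix.mul_assoc]
      _ = W i := by rw [hWPΨ i, h4, hPΨW i]
  intro i j
  have : star (Ψ *ᵥ Pi.single j 1) ⬝ᵥ (M i *ᵥ (Ψ *ᵥ Pi.single j 1))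
      = star (Pi.single j (1:ℂ)) ⬝ᵥ ((Ψᴴ * M i * Ψ) *ᵥ Pi.single j 1) := by
    simp only [star_mulVec, dotProduct_mulVec, Matrix.vecMul_vecMul, Matrix.mul_assoc]
  rw [this, key i]
  simp [Matrix.mulVec_single, dotProduct, Pi.single_apply, apply_ite]
end

section
/- The maximal reward of the generalized pure-state discrimination SDP equals the maximal reward of its Gram-matrix reduction: sup over POVMs {M_i}_{i=1}^L on ℂ^d of Σ_{i,j} R_{ij} q_j ⟨ψ_j|M_i|ψ_j⟩ equals sup over families {W_i}_{i=1}^L of PSD N×N matrices with Σ_i W_i = G of Σ_{i,j} R_{ij} q_j ⟨j|W_i|j⟩. -/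
open Matrix ComplexOrder

lemma pinv_exists {n : Type*} [Fintype n] [DecidableEq n] {A : Matrix n n ℂ}
    (hA : A.IsHermitian) :
    ∃ B : Matrix n n ℂ, Bᴴ = B ∧ A * B = B * A ∧ A * B * A = A ∧ B * A * B = B := by
  set U : Matrix n n ℂ := ↑hA.eigenvectorUnitary with hU
  have hU1 : star U * U = 1 := mem_unitaryGroup_iff'.mp hA.eigenvectorUnitary.2
  set f : n → ℂ := fun i => (hA.eigenvalues i : ℂ) with hf
  set g : n → ℂ := fun i => ((hA.eigenvalues i)⁻¹ : ℝ) with hg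
  have key : ∀ p q : n → ℂ,
      (U * diagonal p * star U) * (U * diagonal q * star U)
        = U * diagonal (p * q) * star U := by
    intro p q
    simp only [Matrix.mul_assoc]
    rw [← Matrix.mul_assoc (star U) U, hU1, Matrix.one_mul,
      ← Matrix.mul_assoc (diagonal p), diagonal_mul_diagonal]
    rfl
  have hfgf : f * g * f = f := by
    funext i
    simp only [Pi.mul_apply, hf, hg]
    by_cases h : hA.eigenvalues i = 0
    · simp [h]
    · push_cast
      field_simp
  have hgfg : g * f * g = g := by
    funext i
    simp only [Pi.mul_apply, hf, hg]
    by_cases h : hA.eigenvalues i = 0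
    · simp [h]
    · push_cast
      field_simp
  have hsg : star g = g := by
    funext i
    simp [hg, Pi.star_apply, Complex.conj_ofReal]
  have hAspec : A = U * diagonal f * star U := hA.spectral_theorem
  refine ⟨U * diagonal g * star U, ?_, ?_, ?_, ?_⟩
  · simp only [Matrix.star_eq_conjTranspose, conjTranspose_mul, conjTranspose_conjTranspose, diagonal_conjTranspose,
      hsg, Matrix.mul_assoc]
  · rw [hAspec, key, key]
    congr 2
    funext i
    simp [mul_comm]
  · rw [hAspec, key, key, hfgf]
  · rw [hAspec, key, key, hgfg]

lemma diag_conj_eq {d N : ℕ} (ψ : Fin N → Fin d → ℂ) (V : Matrix (Fin d) (Fin N) ℂ)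
    (hV : ∀ a k, V a k = ψ k a) (A : Matrix (Fin d) (Fin d) ℂ) (j : Fin N) :
    (Vᴴ * A * V) j j = dotProduct (star (ψ j)) (A *ᵥ ψ j) := by
  simp only [Matrix.mul_apply, Matrix.conjTranspose_apply, dotProduct,
    Matrix.mulVec, Pi.star_apply, hV, Finset.sum_mul, Finset.mul_sum]
  rw [Finset.sum_comm]
  exact Finset.sum_congr rfl fun a _ => Finset.sum_congr rfl fun b _ => by ring

/-- The maximal reward of the generalized pure-state discrimination SDP equals
the maximal reward of its Gram-matrix reduction. -/
theorem sdp_reward_reduction {d N L : ℕ} (ψ : Fin N → (Fin d → ℂ))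
    (R : Fin L → Fin N → ℝ) (q : Fin N → ℝ) (hq : ∀ j, 0 ≤ q j)
    (G : Matrix (Fin N) (Fin N) ℂ)
    (hG : G = Matrix.of fun i j => dotProduct (star (ψ i)) (ψ j)) :
    sSup {x : ℝ | ∃ M : Fin L → Matrix (Fin d) (Fin d) ℂ,
        (∀ i, (M i).PosSemidef) ∧ (∑ i, M i = 1) ∧
        x = ∑ i, ∑ j, R i j * q j *
          (dotProduct (star (ψ j)) ((M i) *ᵥ ψ j)).re}
      = sSup {x : ℝ | ∃ W : Fin L → Matrix (Fin N) (Fin N) ℂ,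
        (∀ i, (W i).PosSemidef) ∧ (∑ i, W i = G) ∧
        x = ∑ i, ∑ j, R i j * q j * ((W i) j j).re} := by
  rcases Nat.eq_zero_or_pos L with hL | hL
  · -- degenerate case: both suprema are 0
    subst hL
    have h1 : ∀ S : Set ℝ, S ⊆ {0} → sSup S = 0 := by
      intro S hS
      rcases Set.subset_singleton_iff_eq.mp hS with h | h
      · rw [h, Real.sSup_empty]
      · rw [h, csSup_singleton]
    rw [h1 _ (by rintro x ⟨M, -, -, rfl⟩; simp), h1 _ (by rintro x ⟨W, -, -, rfl⟩; simp)]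
  · -- main case
    congr 1
    set V : Matrix (Fin d) (Fin N) ℂ := Matrix.of fun a k => ψ k a with hVdef
    have hV : ∀ a k, V a k = ψ k a := fun a k => rfl
    have hVV : Vᴴ * V = G := by
      rw [hG]
      ext j k
      simp [Matrix.mul_apply, Matrix.conjTranspose_apply, dotProduct, hV]
    ext x
    simp only [Set.mem_setOf_eq]
    constructor
    · rintro ⟨M, hpsd, hsum, rfl⟩
      refine ⟨fun i => Vᴴ * M i * V, fun i => (hpsd i).conjTranspose_mul_mul_same V, ?_, ?_⟩
      · show ∑ i, Vᴴ * M i * V = G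
        have hsm : Vᴴ * (∑ i, M i) * V = ∑ i, Vᴴ * M i * V := by
          simp only [Matrix.mul_sum, Matrix.sum_mul]
        rw [← hsm, hsum, Matrix.mul_one, hVV]
      · refine Finset.sum_congr rfl fun i _ => Finset.sum_congr rfl fun j _ => ?_
        show _ = R i j * q j * ((Vᴴ * M i * V) j j).re
        rw [diag_conj_eq ψ V hV (M i) j]
    · rintro ⟨W, hpsd, hsum, rfl⟩
      have hGH : G.IsHermitian := hVV ▸ (posSemidef_conjTranspose_mul_self V).isHermitian
      obtain ⟨B, hBH, hcomm, hGBG, hBGB⟩ := pinv_exists hGH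
      -- W i absorbs the support projection Q = G * B
      have hWQ : ∀ i, W i * (G * B) = W i := by
        intro i
        have hker : ∀ y : Fin N → ℂ, G *ᵥ y = 0 → W i *ᵥ y = 0 := by
          intro y hy
          have hGi : G - W i = ∑ k ∈ Finset.univ.erase i, W k := by
            rw [← hsum, ← Finset.add_sum_erase _ _ (Finset.mem_univ i)]
            abel
          have hGWpsd : (G - W i).PosSemidef := by
            rw [hGi]
            exact Finset.sum_induction _ _ (fun a b ha hb => ha.add hb)
              Matrix.PosSemidef.zero (fun k _ => hpsd k)
          have h1 : (0:ℂ) ≤ star y ⬝ᵥ W i *ᵥ y := (hpsd i).dotProduct_mulVec_nonneg y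
          have h2 : (0:ℂ) ≤ star y ⬝ᵥ (G - W i) *ᵥ y := hGWpsd.dotProduct_mulVec_nonneg y
          have h3 : star y ⬝ᵥ (G - W i) *ᵥ y = - (star y ⬝ᵥ W i *ᵥ y) := by
            rw [Matrix.sub_mulVec, dotProduct_sub, hy, dotProduct_zero, zero_sub]
          rw [h3] at h2
          have h4 : star y ⬝ᵥ W i *ᵥ y = 0 :=
            le_antisymm (by simpa using neg_nonneg.mp (by simpa using h2)) h1
          exact ((hpsd i).dotProduct_mulVec_zero_iff y).mp h4
        have hz : W i * (1 - G * B) = 0 := by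
          ext a b
          have h5 : (W i * (1 - G * B)) *ᵥ Pi.single b 1 = 0 := by
            rw [← Matrix.mulVec_mulVec]
            apply hker
            rw [Matrix.mulVec_mulVec]
            have hG0 : G * (1 - G * B) = 0 := by
              rw [Matrix.mul_sub, Matrix.mul_one, hcomm, ← Matrix.mul_assoc, hGBG, sub_self]
            rw [hG0, Matrix.zero_mulVec]
          have h6 := congrFun h5 a
          simpa using h6
        rw [Matrix.mul_sub, Matrix.mul_one] at hz
        have := sub_eq_zero.mp hz
        exact this.symm
      have hQW : ∀ i, (G * B) * W i = W i := by
        intro i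
        have h7 := congrArg Matrix.conjTranspose (hWQ i)
        rwa [Matrix.conjTranspose_mul, Matrix.conjTranspose_mul, hBH, hGH.eq,
          (hpsd i).isHermitian.eq, ← hcomm] at h7
      -- projection onto the range of V
      have hP : (V * B * Vᴴ) * (V * B * Vᴴ) = V * B * Vᴴ := by
        have h8 : (V * B * Vᴴ) * (V * B * Vᴴ) = V * (B * (Vᴴ * V) * B) * Vᴴ := by
          simp only [Matrix.mul_assoc]
        rw [h8, hVV, hBGB]
      have hPH : (V * B * Vᴴ)ᴴ = V * B * Vᴴ := by
        simp only [Matrix.conjTranspose_mul, Matrix.conjTranspose_conjTranspose, hBH,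
          Matrix.mul_assoc]
      have h1P : (1 - V * B * Vᴴ).PosSemidef := by
        have h9 : (1 - V * B * Vᴴ)ᴴ * (1 - V * B * Vᴴ) = 1 - V * B * Vᴴ := by
          rw [Matrix.conjTranspose_sub, Matrix.conjTranspose_one, hPH, Matrix.sub_mul,
            Matrix.one_mul, Matrix.mul_sub, Matrix.mul_one, hP]
          abel
        rw [← h9]
        exact Matrix.posSemidef_conjTranspose_mul_self _
      set M : Fin L → Matrix (Fin d) (Fin d) ℂ :=
        fun i => V * (B * W i * B) * Vᴴ + if i = (⟨0, hL⟩ : Fin L) then (1 - V * B * Vᴴ) else 0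
        with hMdef
      have hpart : ∀ i, (V * (B * W i * B) * Vᴴ).PosSemidef := by
        intro i
        have h10 := (hpsd i).conjTranspose_mul_mul_same (B * Vᴴ)
        simpa only [Matrix.conjTranspose_mul, Matrix.conjTranspose_conjTranspose, hBH,
          Matrix.mul_assoc] using h10
      have hVMV : ∀ i, Vᴴ * M i * V = W i := by
        intro i
        have h11 : Vᴴ * (V * (B * W i * B) * Vᴴ) * V = G * (B * W i * B) * G := by
          have : Vᴴ * (V * (B * W i * B) * Vᴴ) * V
              = (Vᴴ * V) * (B * W i * B) * (Vᴴ * V) := by simp only [Matrix.mul_assoc]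
          rw [this, hVV]
        have h12 : G * (B * W i * B) * G = W i := by
          have : G * (B * W i * B) * G = ((G * B) * W i) * (B * G) := by
            simp only [Matrix.mul_assoc]
          rw [this, ← hcomm, hQW i, hWQ i]
        have h13 : Vᴴ * (1 - V * B * Vᴴ) * V = 0 := by
          rw [Matrix.mul_sub, Matrix.mul_one, Matrix.sub_mul, hVV]
          have : Vᴴ * (V * B * Vᴴ) * V = G * B * G := by
            have h' : Vᴴ * (V * B * Vᴴ) * V = (Vᴴ * V) * B * (Vᴴ * V) := by
              simp only [Matrix.mul_assoc]
            rw [h', hVV]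
          rw [this, hGBG, sub_self]
        rw [hMdef]
        simp only [Matrix.mul_add, Matrix.add_mul]
        by_cases h : i = (⟨0, hL⟩ : Fin L)
        · rw [if_pos h, h11, h12, h13, add_zero]
        · rw [if_neg h, Matrix.mul_zero, Matrix.zero_mul, h11, h12, add_zero]
      refine ⟨M, ?_, ?_, ?_⟩
      · intro i
        rw [hMdef]
        by_cases h : i = (⟨0, hL⟩ : Fin L)
        · simp only [if_pos h]
          exact (hpart i).add h1P
        · simp only [if_neg h, add_zero]
          exact hpart i
      · rw [hMdef]
        rw [Finset.sum_add_distrib]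
        have hs1 : ∑ i, V * (B * W i * B) * Vᴴ = V * (B * (∑ i, W i) * B) * Vᴴ := by
          simp only [Matrix.mul_sum, Matrix.sum_mul]
        have hs2 : (∑ i, if i = (⟨0, hL⟩ : Fin L) then (1 - V * B * Vᴴ)
            else (0 : Matrix (Fin d) (Fin d) ℂ)) = 1 - V * B * Vᴴ := by
          simp
        rw [hs1, hs2, hsum, hBGB]
        abel
      · refine Finset.sum_congr rfl fun i _ => Finset.sum_congr rfl fun j _ => ?_
        rw [← diag_conj_eq ψ V hV (M i) j, hVMV i]
end
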